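/- Let r ≥ 2 and d be integers. Then the set { (d₀, …, d_{r−1}) ∈ ℤ^r : d₀ + ⋯ + d_{r−1} = d, and r·(dᵢ + d_{i+1} + ⋯ + d_{r−1}) > (r−i)·d for every i = 1, …, r−1 } equals the set { v + ∑_{i=1}^{r−1} aᵢ·(εᵢ − ε_{i−1}) : aᵢ ∈ ℤ, aᵢ ≥ 0 }, where ε₀, …, ε_{r−1} is the standard basis of ℤ^r and v ∈ ℤ^r is given by v₀ = ⌈d/r⌉ − 1, vᵢ = ⌈(i+1)d/r⌉ − ⌈i d/r⌉ for 1 ≤ i ≤ r−2, and v_{r−1} = d − ⌈(r−1)d/r⌉ + 1. -/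

import Mathlib

/-- `ceilQ a b = ⌈a/b⌉` for integers `a, b`, the ceiling of the rational number `a/b`. -/
def ceilQ (a b : ℤ) : ℤ := ⌈(a : ℚ) / (b : ℚ)⌉

/-- The apex `v ∈ ℤ^r` : `v₀ = ⌈d/r⌉ − 1`, `vᵢ = ⌈(i+1)d/r⌉ − ⌈id/r⌉` for
`1 ≤ i ≤ r−2`, and `v_{r−1} = d − ⌈(r−1)d/r⌉ + 1`. -/
def vVec (r : ℕ) (d : ℤ) : Fin r → ℤ := fun i =>
  if (i : ℕ) = 0 then ceilQ d r - 1
  else if (i : ℕ) = r - 1 then d - ceilQ (((r : ℤ) - 1) * d) r + 1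
  else ceilQ ((((i : ℕ) : ℤ) + 1) * d) r - ceilQ (((i : ℕ) : ℤ) * d) r

def Fv (r : ℕ) (d : ℤ) : ℕ → ℤ := fun j =>
  if j = 0 then 1 else if j = r then d + 1 else ceilQ ((j : ℤ) * d) r

lemma vVec_eq (r : ℕ) (hr : 2 ≤ r) (d : ℤ) (j : Fin r) :
    vVec r d j = Fv r d (j.1 + 1) - Fv r d j.1 := by
  have hjr := j.isLt
  unfold vVec Fv
  by_cases h0 : (j : ℕ) = 0
  · have e1 : (j:ℕ) + 1 ≠ 0 := by omega
    have e2 : (j:ℕ) + 1 ≠ r := by omega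
    simp only [if_pos h0, if_neg e1, if_neg e2, h0]
    norm_num
    intro h1; omega
  · by_cases hlast : (j : ℕ) = r - 1
    · have hthis : (j:ℕ) + 1 = r := by omega
      simp only [if_neg h0, if_pos hlast, hthis, if_pos rfl,
        if_neg (show r ≠ 0 by omega)]
      have hcast : (((j : ℕ) : ℤ)) = (r : ℤ) - 1 := by
        omega
      rw [if_neg (show ¬ ((j:ℕ) = r) by omega), hcast]
      simp only [if_true]
      ring
    · have hj1 : ¬ ((j:ℕ) + 1 = 0) := by omega
      have hj2 : ¬ ((j:ℕ) + 1 = r) := by omega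
      simp only [if_neg h0, if_neg hlast, if_neg hj1, if_neg hj2,
        if_neg (show ¬ ((j:ℕ) = r) by omega)]
      push_cast
      ring_nf

lemma tail_tele (r : ℕ) (g : ℕ → ℤ) (k : ℕ) (hk : k ≤ r) :
    ∑ j ∈ Finset.univ.filter (fun j : Fin r => k ≤ (j : ℕ)), (g ((j:ℕ) + 1) - g (j:ℕ))
      = g r - g k := by
  rw [Finset.sum_filter]
  rw [Fin.sum_univ_eq_sum_range (fun j => if k ≤ j then g (j+1) - g j else 0)]
  rw [← Finset.sum_filter]
  have hfil : (Finset.range r).filter (fun j => k ≤ j) = Finset.Ico k r := by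
    ext x; simp [Finset.mem_Ico]; omega
  rw [hfil, Finset.sum_Ico_eq_sub _ hk, Finset.sum_range_sub, Finset.sum_range_sub]
  ring

lemma ceilQ_le (a b : ℤ) (hb : 0 < b) : a ≤ b * ceilQ a b := by
  have hb' : (0:ℚ) < (b:ℚ) := by exact_mod_cast hb
  have h := Int.le_ceil ((a:ℚ)/(b:ℚ))
  have h2 : (a:ℚ) ≤ (b:ℚ) * (⌈(a:ℚ)/(b:ℚ)⌉ : ℚ) := by
    rw [mul_comm]
    exact (div_le_iff₀ hb').mp h
  unfold ceilQ; exact_mod_cast h2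

lemma ceilQ_lt (a b : ℤ) (hb : 0 < b) : b * ceilQ a b < a + b := by
  have hb' : (0:ℚ) < (b:ℚ) := by exact_mod_cast hb
  have h := Int.ceil_lt_add_one ((a:ℚ)/(b:ℚ))
  have h2 : (b:ℚ) * (⌈(a:ℚ)/(b:ℚ)⌉ : ℚ) < (a:ℚ) + b := by
    have := mul_lt_mul_of_pos_left h hb'
    calc (b:ℚ) * (⌈(a:ℚ)/(b:ℚ)⌉ : ℚ) < (b:ℚ) * ((a:ℚ)/(b:ℚ) + 1) := this
    _ = a + b := by field_simp
  unfold ceilQ; exact_mod_cast h2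
def Aa (r : ℕ) (a : Fin r → ℕ) : ℕ → ℤ := fun j =>
  if h : 0 < j ∧ j < r then (a ⟨j, h.2⟩ : ℤ) else 0

lemma Aa_nonneg (r : ℕ) (a : Fin r → ℕ) (j : ℕ) : 0 ≤ Aa r a j := by
  unfold Aa; split <;> positivity

lemma Aa_zero (r : ℕ) (a : Fin r → ℕ) : Aa r a 0 = 0 := by simp [Aa]

lemma Aa_top (r : ℕ) (a : Fin r → ℕ) : Aa r a r = 0 := by simp [Aa]

lemma S_apply (r : ℕ) (a : Fin r → ℕ) (j : Fin r) :
    ((∑ i ∈ Finset.univ.filter (fun i : Fin r => 0 < (i : ℕ)),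
      (a i : ℤ) • (Pi.single i (1 : ℤ) -
        Pi.single (⟨(i : ℕ) - 1, lt_of_le_of_lt (Nat.sub_le _ _) i.isLt⟩ : Fin r)
          (1 : ℤ))) : Fin r → ℤ) j = Aa r a (j : ℕ) - Aa r a ((j : ℕ) + 1) := by
  rw [Finset.sum_apply]
  simp only [Pi.smul_apply, Pi.sub_apply, Pi.single_apply, smul_eq_mul, mul_sub,
    mul_ite, mul_one, mul_zero]
  rw [Finset.sum_sub_distrib]
  congr 1
  · rw [Finset.sum_ite_eq]
    by_cases h : 0 < (j : ℕ)
    · rw [if_pos (by simp [h])]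
      unfold Aa
      rw [dif_pos ⟨h, j.isLt⟩]
    · rw [if_neg (by simp [h])]
      unfold Aa
      rw [dif_neg (by omega)]
  · by_cases h : (j : ℕ) + 1 < r
    · rw [Finset.sum_eq_single_of_mem (⟨(j:ℕ)+1, h⟩ : Fin r)]
      · rw [if_pos (by ext; simp)]
        unfold Aa
        rw [dif_pos ⟨Nat.succ_pos _, h⟩]
      · simp
      · intro i hi hne
        rw [if_neg]
        intro hcon
        apply hne
        have hi' : 0 < (i : ℕ) := by simpa using hi
        have : (j : ℕ) = (i : ℕ) - 1 := by
          have := congrArg Fin.val hcon; simpa using this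
        ext; simp; omega
    · rw [Finset.sum_eq_zero, Aa, dif_neg (by omega)]
      intro i hi
      rw [if_neg]
      intro hcon
      have hi' : 0 < (i : ℕ) := by simpa using hi
      have : (j : ℕ) = (i : ℕ) - 1 := by
        have := congrArg Fin.val hcon; simpa using this
      have := i.isLt
      have := j.isLt
      omega

/-- For integers `r ≥ 2` and `d`, the set of `(d₀, …, d_{r−1}) ∈ ℤ^r` with total sum `d`
and `r·(dᵢ + ⋯ + d_{r−1}) > (r−i)·d` for all `i = 1, …, r−1` is the simple sector
`{v + ∑_{i=1}^{r−1} aᵢ(εᵢ − ε_{i−1}) : aᵢ ∈ ℕ}` with apex `v = vVec r d`. -/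
theorem strict_degree_sector_eq (r : ℕ) (hr : 2 ≤ r) (d : ℤ) :
    {dv : Fin r → ℤ | (∑ i, dv i) = d ∧
      ∀ i ∈ Finset.Ico 1 r,
        ((r : ℤ) - (i : ℤ)) * d <
          (r : ℤ) * ∑ j ∈ Finset.univ.filter (fun j : Fin r => i ≤ (j : ℕ)), dv j} =
    {w : Fin r → ℤ | ∃ a : Fin r → ℕ,
      w = vVec r d + ∑ i ∈ Finset.univ.filter (fun i : Fin r => 0 < (i : ℕ)),
        (a i : ℤ) • (Pi.single i (1 : ℤ) -
          Pi.single (⟨(i : ℕ) - 1, lt_of_le_of_lt (Nat.sub_le _ _) i.isLt⟩ : Fin r)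
            (1 : ℤ))} := by
  have hr0 : (0:ℤ) < (r:ℤ) := by exact_mod_cast (show 0 < r by omega)
  ext dv
  simp only [Set.mem_setOf_eq]
  constructor
  · rintro ⟨hsum, hineq⟩
    set T : ℕ → ℤ :=
      fun k => ∑ j ∈ Finset.univ.filter (fun j : Fin r => k ≤ (j:ℕ)), dv j with hT
    have hT0 : T 0 = d := by
      have hfil : Finset.univ.filter (fun j : Fin r => 0 ≤ (j:ℕ)) = Finset.univ :=
        Finset.filter_true_of_mem (fun _ _ => Nat.zero_le _)
      simp only [hT, hfil]
      exact hsum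
    have hTr : T r = 0 := by
      have hfil : Finset.univ.filter (fun j : Fin r => r ≤ (j:ℕ)) = ∅ := by
        ext j
        simp only [Finset.mem_filter, Finset.mem_univ, true_and, Finset.notMem_empty,
          iff_false, not_le]
        exact j.isLt
      simp [hT, hfil]
    have hstep : ∀ k (hk : k < r), dv ⟨k, hk⟩ = T k - T (k+1) := by
      intro k hk
      have hins : Finset.univ.filter (fun j : Fin r => k ≤ (j:ℕ))
          = insert (⟨k, hk⟩ : Fin r) (Finset.univ.filter (fun j : Fin r => k+1 ≤ (j:ℕ))) := by
        ext j
        simp only [Finset.mem_filter, Finset.mem_univ, true_and, Finset.mem_insert,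
          Fin.ext_iff]
        omega
      have hnm : (⟨k, hk⟩ : Fin r) ∉
          Finset.univ.filter (fun j : Fin r => k+1 ≤ (j:ℕ)) := by simp
      simp only [hT, hins, Finset.sum_insert hnm]
      ring
    have hlb : ∀ k, 1 ≤ k → k < r → d + 1 - ceilQ ((k:ℤ) * d) r ≤ T k := by
      intro k h1 h2
      have hin := hineq k (Finset.mem_Ico.mpr ⟨h1, h2⟩)
      have hcl := ceilQ_le ((k:ℤ)*d) r hr0
      have h3 : (r:ℤ) * (d - ceilQ ((k:ℤ)*d) r) < (r:ℤ) * T k := by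
        simp only [hT] at hin ⊢
        nlinarith
      have h4 := lt_of_mul_lt_mul_left h3 (le_of_lt hr0)
      omega
    set a : Fin r → ℕ := fun i =>
      if 0 < (i:ℕ) then (T (i:ℕ) - (d + 1 - ceilQ (((i:ℕ):ℤ) * d) r)).toNat else 0 with ha
    refine ⟨a, ?_⟩
    funext j
    rw [Pi.add_apply, S_apply, vVec_eq r hr d j]
    have hG : ∀ k, k ≤ r → Fv r d k - Aa r a k = d + 1 - T k := by
      intro k hk
      rcases Nat.eq_zero_or_pos k with h0 | h0
      · subst h0
        rw [Aa_zero, hT0]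
        unfold Fv
        simp
      · rcases eq_or_lt_of_le hk with hkr | hkr
        · subst hkr
          rw [Aa_top, hTr]
          unfold Fv
          rw [if_neg (by omega), if_pos rfl]
        · unfold Fv Aa
          rw [if_neg (by omega), if_neg (by omega), dif_pos ⟨h0, hkr⟩]
          have hval : ((a ⟨k, hkr⟩ : ℕ) : ℤ)
              = T k - (d + 1 - ceilQ ((k:ℤ)*d) r) := by
            simp only [ha, if_pos h0]
            rw [Int.toNat_of_nonneg (by have := hlb k h0 hkr; omega)]
          rw [hval]
          ring
    have e1 := hG (j.1+1) (by omega)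
    have e2 := hG j.1 (le_of_lt j.isLt)
    have e3 : dv j = T j.1 - T (j.1+1) := by
      have := hstep j.1 j.isLt
      simpa using this
    linarith [e1, e2, e3]
  · rintro ⟨a, rfl⟩
    have hwj : ∀ j : Fin r,
        (vVec r d + ∑ i ∈ Finset.univ.filter (fun i : Fin r => 0 < (i : ℕ)),
          (a i : ℤ) • (Pi.single i (1 : ℤ) -
            Pi.single (⟨(i : ℕ) - 1, lt_of_le_of_lt (Nat.sub_le _ _) i.isLt⟩ : Fin r)
              (1 : ℤ))) j
        = ((Fv r d (j.1+1) - Aa r a (j.1+1)) - (Fv r d j.1 - Aa r a j.1)) := by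
      intro j
      rw [Pi.add_apply, S_apply, vVec_eq r hr d j]
      ring
    have hGr : Fv r d r - Aa r a r = d + 1 := by
      rw [Aa_top]
      unfold Fv
      rw [if_neg (by omega), if_pos rfl]
      ring
    have htt : ∀ k, k ≤ r →
        ∑ j ∈ Finset.univ.filter (fun j : Fin r => k ≤ (j:ℕ)),
          (vVec r d + ∑ i ∈ Finset.univ.filter (fun i : Fin r => 0 < (i : ℕ)),
            (a i : ℤ) • (Pi.single i (1 : ℤ) -
              Pi.single (⟨(i : ℕ) - 1, lt_of_le_of_lt (Nat.sub_le _ _) i.isLt⟩ : Fin r)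
                (1 : ℤ))) j
        = (d + 1) - (Fv r d k - Aa r a k) := by
      intro k hk
      rw [← hGr, ← tail_tele r (fun m => Fv r d m - Aa r a m) k hk]
      exact Finset.sum_congr rfl (fun j _ => hwj j)
    constructor
    · have hfil : Finset.univ.filter (fun j : Fin r => 0 ≤ (j:ℕ)) = Finset.univ :=
        Finset.filter_true_of_mem (fun _ _ => Nat.zero_le _)
      have h00 := htt 0 (Nat.zero_le r)
      rw [hfil] at h00
      rw [h00, Aa_zero]
      unfold Fv
      simp
    · intro k hk
      rw [Finset.mem_Ico] at hk
      rw [htt k (le_of_lt hk.2)]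
      have hcu := ceilQ_lt ((k:ℤ)*d) r hr0
      have hA := Aa_nonneg r a k
      have hGk : Fv r d k - Aa r a k = ceilQ ((k:ℤ)*d) r - Aa r a k := by
        unfold Fv
        rw [if_neg (by omega), if_neg (by omega)]
      rw [hGk]
      nlinarith [mul_nonneg (le_of_lt hr0) hA]
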